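/- Let $r \ge 1$ and let $a_1, \dots, a_r, c_1, \dots, c_r$ be positive reals. Set $m = \min_{1\le i \le r} a_i/c_i$ and $b = \#\{i \mid a_i/c_i = m\}$. Then there exist constants $0 < k_1 \le k_2$ and $T_0 > 0$ such that for all $T \ge T_0$, $k_1 e^{-mT} T^{b-1} \le \int_{\{t \in \mathbb{R}_{\ge 0}^r : \sum_i c_i t_i \ge T\}} e^{-\sum_i a_i t_i}\, dt \le k_2 e^{-mT} T^{b-1}$. -/

import Mathlib

open MeasureTheory
open MeasureTheory Real Set
open scoped ENNReal

noncomputable def Lam (n : ℕ) (a c : Fin n → ℝ) (T : ℝ) : ℝ≥0∞ :=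
  ∫⁻ t : Fin n → ℝ,
    if (∀ i, 0 ≤ t i) ∧ T ≤ ∑ i, c i * t i then ENNReal.ofReal (Real.exp (-(∑ i, a i * t i)))
    else 0

lemma meas_set (n : ℕ) (c : Fin n → ℝ) (T : ℝ) :
    MeasurableSet {t : Fin n → ℝ | (∀ i, 0 ≤ t i) ∧ T ≤ ∑ i, c i * t i} := by
  have h1 : MeasurableSet {t : Fin n → ℝ | ∀ i, 0 ≤ t i} := by
    have : {t : Fin n → ℝ | ∀ i, 0 ≤ t i} = ⋂ i, {t | 0 ≤ t i} := by ext t; simp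
    rw [this]
    exact MeasurableSet.iInter fun i => measurableSet_le measurable_const (measurable_pi_apply i)
  have h2 : MeasurableSet {t : Fin n → ℝ | T ≤ ∑ i, c i * t i} :=
    measurableSet_le measurable_const
      (Finset.measurable_sum _ fun i _ => (measurable_pi_apply i).const_mul _)
  exact h1.inter h2

lemma meas_integrand (n : ℕ) (a c : Fin n → ℝ) (T : ℝ) :
    Measurable fun t : Fin n → ℝ =>
      (if (∀ i, 0 ≤ t i) ∧ T ≤ ∑ i, c i * t i then
        ENNReal.ofReal (Real.exp (-(∑ i, a i * t i))) else 0) := by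
  apply Measurable.ite (meas_set n c T) _ measurable_const
  exact ENNReal.measurable_ofReal.comp <| Real.measurable_exp.comp <|
    (Finset.measurable_sum _ fun i _ => (measurable_pi_apply i).const_mul _).neg

lemma lam_zero (a c : Fin 0 → ℝ) (T : ℝ) : Lam 0 a c T = if T ≤ 0 then 1 else 0 := by
  unfold Lam
  have h : ∀ t : Fin 0 → ℝ,
      (if (∀ i, 0 ≤ t i) ∧ T ≤ ∑ i, c i * t i then
        ENNReal.ofReal (Real.exp (-(∑ i, a i * t i))) else 0) = if T ≤ 0 then 1 else 0 := by
    intro t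
    simp [Finset.univ_eq_empty]
  simp only [h]
  rw [lintegral_const]
  simp [volume_pi, Measure.pi_empty_univ]

lemma lam_succ (n : ℕ) (a c : Fin (n + 1) → ℝ) (T : ℝ) :
    Lam (n + 1) a c T = ∫⁻ x in Set.Ici (0 : ℝ),
      ENNReal.ofReal (Real.exp (-(a 0 * x))) *
        Lam n (fun i => a i.succ) (fun i => c i.succ) (T - c 0 * x) := by
  have hmeas := meas_integrand (n + 1) a c T
  set F : (Fin (n + 1) → ℝ) → ℝ≥0∞ := fun t =>
    if (∀ i, 0 ≤ t i) ∧ T ≤ ∑ i, c i * t i then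
      ENNReal.ofReal (Real.exp (-(∑ i, a i * t i))) else 0 with hF
  set e := MeasurableEquiv.piFinSuccAbove (fun _ : Fin (n + 1) => ℝ) 0 with he
  have hmp := (volume_preserving_piFinSuccAbove (fun _ : Fin (n + 1) => ℝ) 0).symm
  have hpt : ∀ (x : ℝ) (y : Fin n → ℝ),
      F (e.symm (x, y)) =
      (if 0 ≤ x then ENNReal.ofReal (Real.exp (-(a 0 * x))) else 0) *
        (if (∀ i, 0 ≤ y i) ∧ T - c 0 * x ≤ ∑ i, c i.succ * y i then
          ENNReal.ofReal (Real.exp (-(∑ i, a i.succ * y i))) else 0) := by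
    intro x y
    have hc : (e.symm (x, y) : Fin (n+1) → ℝ) = Fin.cons (α := fun _ => ℝ) x y := by
      simp [he, MeasurableEquiv.piFinSuccAbove_symm_apply, Fin.insertNthEquiv,
        Fin.insertNth_zero]
    rw [hc, hF]
    have hforall : (∀ i, 0 ≤ Fin.cons (α := fun _ => ℝ) x y i) ↔ (0 ≤ x ∧ ∀ i, 0 ≤ y i) := by
      constructor
      · intro h
        exact ⟨by simpa using h 0, fun i => by simpa using h i.succ⟩
      · rintro ⟨h0, h⟩ i
        refine Fin.cases ?_ ?_ i
        · simpa using h0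
        · intro j; simpa using h j
    have hsum_c : ∑ i, c i * Fin.cons (α := fun _ => ℝ) x y i = c 0 * x + ∑ i, c i.succ * y i := by
      rw [Fin.sum_univ_succ]; simp
    have hsum_a : ∑ i, a i * Fin.cons (α := fun _ => ℝ) x y i = a 0 * x + ∑ i, a i.succ * y i := by
      rw [Fin.sum_univ_succ]; simp
    simp only [hforall, hsum_c, hsum_a]
    by_cases hx : 0 ≤ x
    · by_cases hy : (∀ i, 0 ≤ y i) ∧ T - c 0 * x ≤ ∑ i, c i.succ * y i
      · rw [if_pos ⟨⟨hx, hy.1⟩, by linarith [hy.2]⟩, if_pos hx, if_pos hy,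
          ← ENNReal.ofReal_mul (exp_nonneg _), ← Real.exp_add, ← neg_add]
      · rw [if_neg, if_pos hx, if_neg hy, mul_zero]
        rintro ⟨⟨-, h1⟩, h2⟩
        exact hy ⟨h1, by linarith⟩
    · rw [if_neg, if_neg hx, zero_mul]
      rintro ⟨⟨h1, -⟩, -⟩
      exact hx h1
  calc Lam (n + 1) a c T
      = ∫⁻ p : ℝ × (Fin n → ℝ), F (e.symm p) := (hmp.lintegral_comp hmeas).symm
    _ = ∫⁻ x : ℝ, ∫⁻ y : Fin n → ℝ, F (e.symm (x, y)) := by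
        rw [MeasureTheory.Measure.volume_eq_prod]
        exact lintegral_prod _ (hmeas.comp (MeasurableEquiv.measurable _)).aemeasurable
    _ = ∫⁻ x : ℝ, (if 0 ≤ x then ENNReal.ofReal (Real.exp (-(a 0 * x))) else 0) *
          Lam n (fun i => a i.succ) (fun i => c i.succ) (T - c 0 * x) := by
        refine lintegral_congr fun x => ?_
        rw [lintegral_congr (hpt x), lintegral_const_mul' _ _ (by split <;> simp)]
        rfl
    _ = ∫⁻ x in Set.Ici (0 : ℝ),
          ENNReal.ofReal (Real.exp (-(a 0 * x))) *
            Lam n (fun i => a i.succ) (fun i => c i.succ) (T - c 0 * x) := by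
        rw [← lintegral_indicator measurableSet_Ici _]
        refine lintegral_congr fun x => ?_
        rw [Set.indicator_apply]
        simp only [mem_Ici]
        split <;> simp [*]

lemma integral_exp_neg_mul (l s : ℝ) (hl : 0 < l) :
    ∫ x in Ioi s, Real.exp (-(l * x)) = Real.exp (-(l * s)) / l := by
  have hderiv : ∀ x ∈ Ici s,
      HasDerivAt (fun x => -Real.exp (-(l * x)) / l) (Real.exp (-(l * x))) x := by
    intro x _
    have h1 : HasDerivAt (fun x : ℝ => -(l * x)) (-l) x := by
      exact ((hasDerivAt_id x).const_mul l).neg.congr_deriv (by simp)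
    have h2 := (Real.hasDerivAt_exp (-(l * x))).comp x h1
    have h3 := (h2.neg).div_const l
    exact h3.congr_deriv (by field_simp [hl.ne'])
  have hint : IntegrableOn (fun x => Real.exp (-(l * x))) (Ioi s) := by
    simpa [neg_mul] using exp_neg_integrableOn_Ioi s hl
  have h1 : Filter.Tendsto (fun x : ℝ => l * x) Filter.atTop Filter.atTop :=
    Filter.Tendsto.const_mul_atTop hl Filter.tendsto_id
  have h2 : Filter.Tendsto (fun x : ℝ => -(l * x)) Filter.atTop Filter.atBot :=
    Filter.tendsto_neg_atTop_atBot.comp h1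
  have h3 : Filter.Tendsto (fun x : ℝ => Real.exp (-(l * x))) Filter.atTop (nhds 0) :=
    Real.tendsto_exp_atBot.comp h2
  have htend : Filter.Tendsto (fun x : ℝ => -Real.exp (-(l * x)) / l)
      Filter.atTop (nhds 0) := by
    have := (h3.neg).div_const l
    simpa using this
  have := integral_Ioi_of_hasDerivAt_of_tendsto' hderiv hint htend
  rw [this]
  field_simp
  ring

lemma lint_exp (l s : ℝ) (hl : 0 < l) :
    ∫⁻ x in Ici s, ENNReal.ofReal (Real.exp (-(l * x)))
      = ENNReal.ofReal (Real.exp (-(l * s)) / l) := by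
  rw [← MeasureTheory.Measure.restrict_congr_set Ioi_ae_eq_Ici]
  rw [← ofReal_integral_eq_lintegral_ofReal
    (by have h := exp_neg_integrableOn_Ioi s hl; simp only [neg_mul] at h; exact h)
    (Filter.Eventually.of_forall fun x => exp_nonneg _)]
  rw [integral_exp_neg_mul l s hl]

lemma lint_exp_Ioi (l s : ℝ) (hl : 0 < l) :
    ∫⁻ x in Ioi s, ENNReal.ofReal (Real.exp (-(l * x)))
      = ENNReal.ofReal (Real.exp (-(l * s)) / l) := by
  rw [MeasureTheory.Measure.restrict_congr_set Ioi_ae_eq_Ici]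
  exact lint_exp l s hl

lemma lam_le_mass (n : ℕ) : ∀ (a c : Fin n → ℝ), (∀ i, 0 < a i) → ∀ T : ℝ,
    Lam n a c T ≤ ENNReal.ofReal (∏ i, (a i)⁻¹) := by
  induction n with
  | zero =>
    intro a c ha T
    rw [lam_zero]
    simp only [Finset.univ_eq_empty, Finset.prod_empty, ENNReal.ofReal_one]
    split <;> simp
  | succ n ih =>
    intro a c ha T
    rw [lam_succ]
    calc ∫⁻ x in Ici (0:ℝ), ENNReal.ofReal (Real.exp (-(a 0 * x))) *
          Lam n (fun i => a i.succ) (fun i => c i.succ) (T - c 0 * x)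
        ≤ ∫⁻ x in Ici (0:ℝ), ENNReal.ofReal (Real.exp (-(a 0 * x))) *
          ENNReal.ofReal (∏ i : Fin n, (a i.succ)⁻¹) := by
          refine lintegral_mono fun x => ?_
          exact mul_le_mul_right (ih _ _ (fun i => ha i.succ) _) _
      _ = (∫⁻ x in Ici (0:ℝ), ENNReal.ofReal (Real.exp (-(a 0 * x)))) *
          ENNReal.ofReal (∏ i : Fin n, (a i.succ)⁻¹) :=
          lintegral_mul_const' _ _ (by simp)
      _ = ENNReal.ofReal (Real.exp (-(a 0 * 0)) / a 0) *
          ENNReal.ofReal (∏ i : Fin n, (a i.succ)⁻¹) := by rw [lint_exp _ _ (ha 0)]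
      _ ≤ ENNReal.ofReal (∏ i : Fin (n+1), (a i)⁻¹) := by
          rw [← ENNReal.ofReal_mul (div_nonneg (exp_nonneg _) (ha 0).le), Fin.prod_univ_succ]
          apply ENNReal.ofReal_le_ofReal
          simp [exp_zero, one_div]

lemma lint_exp_Icc (μ q : ℝ) (hμ : 0 < μ) (hq : 0 ≤ q) :
    ∫⁻ x in Icc (0:ℝ) q, ENNReal.ofReal (Real.exp (μ * x))
      ≤ ENNReal.ofReal (Real.exp (μ * q) / μ) := by
  have hcont : Continuous fun x : ℝ => Real.exp (μ * x) :=
    Real.continuous_exp.comp (continuous_const.mul continuous_id)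
  rw [← ofReal_integral_eq_lintegral_ofReal (hcont.integrableOn_Icc)
    (Filter.Eventually.of_forall fun x => exp_nonneg _)]
  apply ENNReal.ofReal_le_ofReal
  have h1 : ∫ x in Icc (0:ℝ) q, Real.exp (μ * x) = ∫ x in (0:ℝ)..q, Real.exp (μ * x) := by
    rw [intervalIntegral.integral_of_le hq, integral_Icc_eq_integral_Ioc]
  have h2 : ∫ x in (0:ℝ)..q, Real.exp (μ * x)
      = Real.exp (μ * q) / μ - Real.exp (μ * 0) / μ := by
    refine intervalIntegral.integral_eq_sub_of_hasDerivAt (f := fun x => Real.exp (μ * x) / μ) (fun x _ => ?_)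
      ((hcont.intervalIntegrable _ _))
    have h1' : HasDerivAt (fun x : ℝ => μ * x) μ x := by
      simpa using (hasDerivAt_id x).const_mul μ
    have h2' := (Real.hasDerivAt_exp (μ * x)).comp x h1'
    have h3' := h2'.div_const μ
    exact h3'.congr_deriv (by field_simp [hμ.ne'])
  rw [h1, h2]
  have : 0 < Real.exp (μ * 0) / μ := by positivity
  linarith

lemma poly_le_exp (p : ℕ) {ν A B u : ℝ} (hν : 0 < ν) (hA : 0 ≤ A) (hB : 0 ≤ B)
    (hu : 0 ≤ u) :
    (A + B * u) ^ p ≤ (A + B * p / ν) ^ p * Real.exp (ν * u) := by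
  rcases Nat.eq_zero_or_pos p with hp | hp
  · simp only [hp, pow_zero, one_mul]
    exact Real.one_le_exp (by positivity)
  · have hp' : (1:ℝ) ≤ (p:ℝ) := by exact_mod_cast hp
    have hp0 : (0:ℝ) < p := by linarith
    have h1 : A + B * u ≤ (A + B * p / ν) * (1 + ν * u / p) := by
      have e1 : (A + B * p / ν) * (1 + ν * u / p)
          = A + B * u + (A * (ν * u / p) + B * p / ν) := by field_simp; ring
      nlinarith [mul_nonneg hA (div_nonneg (mul_nonneg hν.le hu) hp0.le),
        div_nonneg (mul_nonneg hB hp0.le) hν.le]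
    calc (A + B * u) ^ p ≤ ((A + B * p / ν) * (1 + ν * u / p)) ^ p :=
          pow_le_pow_left₀ (by positivity) h1 p
      _ = (A + B * p / ν) ^ p * (1 + ν * u / p) ^ p := mul_pow _ _ _
      _ ≤ (A + B * p / ν) ^ p * Real.exp (ν * u) := by
          apply mul_le_mul_of_nonneg_left _ (by positivity)
          have h2 : (1 + ν * u / p) ≤ Real.exp (ν * u / p) := by
            have := Real.add_one_le_exp (ν * u / p)
            linarith
          calc (1 + ν * u / p) ^ p ≤ Real.exp (ν * u / p) ^ p :=
                pow_le_pow_left₀ (by positivity) h2 p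
            _ = Real.exp (ν * u) := by
                rw [← Real.exp_nat_mul]
                congr 1
                field_simp

lemma tail_bound {l s M : ℝ} (hl : 0 < l) (hM : 0 ≤ M) {f : ℝ → ℝ≥0∞}
    (hf : ∀ x, f x ≤ ENNReal.ofReal M) :
    ∫⁻ x in Ioi s, ENNReal.ofReal (Real.exp (-(l * x))) * f x
      ≤ ENNReal.ofReal (M * (Real.exp (-(l * s)) / l)) := by
  calc ∫⁻ x in Ioi s, ENNReal.ofReal (Real.exp (-(l * x))) * f x
      ≤ ∫⁻ x in Ioi s, ENNReal.ofReal (Real.exp (-(l * x))) * ENNReal.ofReal M :=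
        lintegral_mono fun x => mul_le_mul_right (hf x) _
    _ = (∫⁻ x in Ioi s, ENNReal.ofReal (Real.exp (-(l * x)))) * ENNReal.ofReal M :=
        lintegral_mul_const' _ _ (by simp)
    _ = ENNReal.ofReal (Real.exp (-(l * s)) / l) * ENNReal.ofReal M := by
        rw [lint_exp_Ioi l s hl]
    _ = ENNReal.ofReal (M * (Real.exp (-(l * s)) / l)) := by
        rw [← ENNReal.ofReal_mul (by positivity), mul_comm]

lemma const_lower {p q C : ℝ} (hC : 0 ≤ C) {f : ℝ → ℝ≥0∞}
    (hf : ∀ x ∈ Icc p q, ENNReal.ofReal C ≤ f x) :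
    ENNReal.ofReal (C * (q - p)) ≤ ∫⁻ x in Icc p q, f x := by
  calc ENNReal.ofReal (C * (q - p))
      = ENNReal.ofReal C * volume (Icc p q) := by
        rw [Real.volume_Icc, ← ENNReal.ofReal_mul hC]
    _ = ∫⁻ _ in Icc p q, ENNReal.ofReal C := (setLIntegral_const _ _).symm
    _ ≤ ∫⁻ x in Icc p q, f x := setLIntegral_mono' measurableSet_Icc hf

lemma split_Ici {q : ℝ} (hq : 0 ≤ q) (f : ℝ → ℝ≥0∞) :
    ∫⁻ x in Ici (0:ℝ), f x = (∫⁻ x in Icc (0:ℝ) q, f x) + ∫⁻ x in Ioi q, f x := by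
  have hset : Icc (0:ℝ) q ∪ Ioi q = Ici 0 := by
    ext z
    simp only [mem_union, mem_Icc, mem_Ioi, mem_Ici]
    constructor
    · rintro (⟨h, -⟩ | h)
      · exact h
      · exact le_trans hq h.le
    · intro h
      rcases le_or_gt z q with h' | h'
      · exact Or.inl ⟨h, h'⟩
      · exact Or.inr h'
  rw [← hset, lintegral_union measurableSet_Ioi
    (Set.disjoint_left.mpr fun x hx hx' => absurd hx.2 (not_le.mpr hx'))]

lemma upper_decay {l C : ℝ} (hl : 0 < l) (hC : 0 ≤ C) {s : Set ℝ}
    (hs : MeasurableSet s) (hsub : s ⊆ Ici 0) {f : ℝ → ℝ≥0∞}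
    (hf : ∀ x ∈ s, f x ≤ ENNReal.ofReal (C * Real.exp (-(l * x)))) :
    ∫⁻ x in s, f x ≤ ENNReal.ofReal (C / l) := by
  calc ∫⁻ x in s, f x
      ≤ ∫⁻ x in s, ENNReal.ofReal (C * Real.exp (-(l * x))) := setLIntegral_mono' hs hf
    _ ≤ ∫⁻ x in Ici (0:ℝ), ENNReal.ofReal (C * Real.exp (-(l * x))) :=
        lintegral_mono_set hsub
    _ = ENNReal.ofReal C * ∫⁻ x in Ici (0:ℝ), ENNReal.ofReal (Real.exp (-(l * x))) := by
        simp_rw [ENNReal.ofReal_mul hC]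
        exact lintegral_const_mul' _ _ (by simp)
    _ = ENNReal.ofReal C * ENNReal.ofReal (Real.exp (-(l * 0)) / l) := by
        rw [lint_exp l 0 hl]
    _ = ENNReal.ofReal (C / l) := by
        rw [← ENNReal.ofReal_mul hC, mul_zero, neg_zero, Real.exp_zero, one_div,
          div_eq_mul_inv]

lemma upper_grow {ν C q : ℝ} (hν : 0 < ν) (hC : 0 ≤ C) (hq : 0 ≤ q) {f : ℝ → ℝ≥0∞}
    (hf : ∀ x ∈ Icc (0:ℝ) q, f x ≤ ENNReal.ofReal (C * Real.exp (ν * x))) :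
    ∫⁻ x in Icc (0:ℝ) q, f x ≤ ENNReal.ofReal (C * (Real.exp (ν * q) / ν)) := by
  calc ∫⁻ x in Icc (0:ℝ) q, f x
      ≤ ∫⁻ x in Icc (0:ℝ) q, ENNReal.ofReal (C * Real.exp (ν * x)) :=
        setLIntegral_mono' measurableSet_Icc hf
    _ = ENNReal.ofReal C * ∫⁻ x in Icc (0:ℝ) q, ENNReal.ofReal (Real.exp (ν * x)) := by
        simp_rw [ENNReal.ofReal_mul hC]
        exact lintegral_const_mul' _ _ (by simp)
    _ ≤ ENNReal.ofReal C * ENNReal.ofReal (Real.exp (ν * q) / ν) :=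
        mul_le_mul_right (lint_exp_Icc ν q hν hq) _
    _ = ENNReal.ofReal (C * (Real.exp (ν * q) / ν)) := by
        rw [← ENNReal.ofReal_mul hC]

lemma upper_const {p q C : ℝ} (hC : 0 ≤ C) {f : ℝ → ℝ≥0∞}
    (hf : ∀ x ∈ Icc p q, f x ≤ ENNReal.ofReal C) :
    ∫⁻ x in Icc p q, f x ≤ ENNReal.ofReal (C * (q - p)) := by
  calc ∫⁻ x in Icc p q, f x
      ≤ ∫⁻ _ in Icc p q, ENNReal.ofReal C := setLIntegral_mono' measurableSet_Icc hf
    _ = ENNReal.ofReal C * volume (Icc p q) := setLIntegral_const _ _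
    _ = ENNReal.ofReal (C * (q - p)) := by
        rw [Real.volume_Icc, ← ENNReal.ofReal_mul hC]

set_option maxHeartbeats 2000000 in
lemma key (n : ℕ) : ∀ (a c : Fin (n+1) → ℝ), (∀ i, 0 < a i) → (∀ i, 0 < c i) →
    ∀ m : ℝ, (∀ i, m ≤ a i / c i) → (∃ i, a i / c i = m) →
    ∀ b : ℕ, b = (Finset.univ.filter (fun i => a i / c i = m)).card →
    ∃ k₁ k₂ T₀ : ℝ, 0 < k₁ ∧ 0 < k₂ ∧ 1 ≤ T₀ ∧ ∀ T, T₀ ≤ T →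
      ENNReal.ofReal (k₁ * Real.exp (-(m * T)) * T ^ (b - 1)) ≤ Lam (n+1) a c T ∧
      Lam (n+1) a c T ≤ ENNReal.ofReal (k₂ * Real.exp (-(m * T)) * T ^ (b - 1)) := by
  induction n with
  | zero =>
    intro a c ha hc m hm hm2 b hb
    obtain ⟨j, hj⟩ := hm2
    have hmval : m = a 0 / c 0 := by
      rw [← hj, Subsingleton.elim (0 : Fin 1) j]
    have hb1 : b = 1 := by
      rw [hb]
      have h : (Finset.univ.filter (fun i : Fin 1 => a i / c i = m)) = {0} := by
        apply Finset.eq_singleton_iff_unique_mem.mpr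
        exact ⟨by simp [Finset.mem_filter, hmval], fun x _ => Subsingleton.elim _ _⟩
      rw [h, Finset.card_singleton]
    refine ⟨(a 0)⁻¹, (a 0)⁻¹, 1, inv_pos.mpr (ha 0), inv_pos.mpr (ha 0), le_refl 1, ?_⟩
    intro T hT
    have hT0 : (0:ℝ) < T := lt_of_lt_of_le one_pos hT
    have hLam : Lam 1 a c T
        = ENNReal.ofReal ((a 0)⁻¹ * Real.exp (-(m * T)) * T ^ (b - 1)) := by
      rw [lam_succ]
      have hpt : ∀ x : ℝ, ENNReal.ofReal (Real.exp (-(a 0 * x))) *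
          Lam 0 (fun i => a i.succ) (fun i => c i.succ) (T - c 0 * x)
          = (Ici (T / c 0)).indicator
              (fun x => ENNReal.ofReal (Real.exp (-(a 0 * x)))) x := by
        intro x
        rw [lam_zero, Set.indicator_apply]
        simp only [mem_Ici]
        have hiff : T - c 0 * x ≤ 0 ↔ T / c 0 ≤ x := by
          rw [div_le_iff₀ (hc 0)]
          constructor <;> intro h <;> nlinarith
        by_cases h : T - c 0 * x ≤ 0
        · rw [if_pos h, if_pos (hiff.mp h), mul_one]
        · rw [if_neg h, if_neg (fun hh => h (hiff.mpr hh)), mul_zero]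
      rw [lintegral_congr hpt, lintegral_indicator measurableSet_Ici,
        Measure.restrict_restrict measurableSet_Ici,
        inter_eq_left.mpr (Ici_subset_Ici.mpr (div_nonneg hT0.le (hc 0).le)), lint_exp _ _ (ha 0)]
      congr 1
      rw [hb1, hmval]
      have h : a 0 * (T / c 0) = a 0 / c 0 * T := by ring
      rw [h]
      simp only [Nat.sub_self, pow_zero, mul_one]
      rw [div_eq_inv_mul]
    rw [hLam]
    exact ⟨le_refl _, le_refl _⟩
  | succ n ih =>
    intro a c ha hc m hm hm2 b hb
    obtain ⟨i₀, -, hi₀⟩ := Finset.exists_min_image Finset.univ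
      (fun i : Fin (n+1) => a i.succ / c i.succ) ⟨0, Finset.mem_univ 0⟩
    obtain ⟨m', hm'def⟩ : ∃ x : ℝ, x = a i₀.succ / c i₀.succ := ⟨_, rfl⟩
    have hm'le : ∀ i : Fin (n+1), m' ≤ a i.succ / c i.succ := by
      intro i
      rw [hm'def]
      exact hi₀ i (Finset.mem_univ i)
    obtain ⟨b', hb'def⟩ : ∃ k : ℕ, k = (Finset.univ.filter
      (fun i : Fin (n+1) => a i.succ / c i.succ = m')).card := ⟨_, rfl⟩
    obtain ⟨k₁', k₂', T₀', hk₁', hk₂', hT₀', hIH⟩ :=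
      ih (fun i => a i.succ) (fun i => c i.succ) (fun i => ha i.succ)
        (fun i => hc i.succ) m' hm'le ⟨i₀, hm'def.symm⟩ b' hb'def
    have ha0 := ha 0
    have hc0 := hc 0
    have hm'pos : 0 < m' := by
      rw [hm'def]
      exact div_pos (ha i₀.succ) (hc i₀.succ)
    have hρpos : 0 < a 0 / c 0 := div_pos ha0 hc0
    have hb'pos : 1 ≤ b' := by
      rw [hb'def]
      exact Finset.card_pos.mpr ⟨i₀, by simp [Finset.mem_filter, hm'def]⟩
    have hT₀'pos : (0:ℝ) < T₀' := lt_of_lt_of_le one_pos hT₀'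
    have hmρ : m ≤ a 0 / c 0 := hm 0
    have hmm' : m ≤ m' := by
      rw [hm'def]
      exact hm i₀.succ
    have hmor : m = a 0 / c 0 ∨ m = m' := by
      obtain ⟨j, hj⟩ := hm2
      rcases Fin.eq_zero_or_eq_succ j with h0 | ⟨j', rfl⟩
      · left; rw [← hj, h0]
      · exact Or.inr (le_antisymm hmm' (by rw [← hj]; exact hm'le j'))
    have hcard : b = (if a 0 / c 0 = m then 1 else 0) +
        (Finset.univ.filter (fun i : Fin (n+1) => a i.succ / c i.succ = m)).card := by
      rw [hb, Finset.card_filter, Fin.sum_univ_succ, ← Finset.card_filter]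
    obtain ⟨M', hM'def⟩ : ∃ x : ℝ, x = ∏ i : Fin (n+1), (a i.succ)⁻¹ := ⟨_, rfl⟩
    have hM'pos : 0 < M' := by
      rw [hM'def]
      exact Finset.prod_pos fun i _ => inv_pos.mpr (ha i.succ)
    have hmass : ∀ u, Lam (n+1) (fun i => a i.succ) (fun i => c i.succ) u
        ≤ ENNReal.ofReal M' := by
      intro u
      rw [hM'def]
      exact lam_le_mass (n+1) _ _ (fun i => ha i.succ) u
    have hrec : ∀ T : ℝ, Lam (n+1+1) a c T = ∫⁻ x in Ici (0:ℝ),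
        ENNReal.ofReal (Real.exp (-(a 0 * x))) *
          Lam (n+1) (fun i => a i.succ) (fun i => c i.succ) (T - c 0 * x) :=
      fun T => lam_succ (n+1) a c T
    rcases lt_trichotomy (a 0 / c 0) m' with hlt | heq | hgt
    · -- a 0 / c 0 < m' ; m = a 0 / c 0, b = 1
      have hmeq : m = a 0 / c 0 := by
        rcases hmor with h | h
        · exact h
        · rw [h] at hmρ; linarith
      have hbeq : b = 1 := by
        rw [hcard, if_pos hmeq.symm]
        have hzero : (Finset.univ.filter
            (fun i : Fin (n+1) => a i.succ / c i.succ = m)).card = 0 := by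
          rw [Finset.card_eq_zero, Finset.filter_eq_empty_iff]
          intro i _
          have h1 : m < a i.succ / c i.succ :=
            lt_of_lt_of_le (hmeq ▸ hlt) (hm'le i)
          exact ne_of_gt h1
        rw [hzero]
      obtain ⟨p, hp⟩ : ∃ p : ℕ, b' = p + 1 :=
        ⟨b' - 1, (Nat.succ_pred_eq_of_pos hb'pos).symm⟩
      have hnu : 0 < (m' * c 0 - a 0) / 2 := by
        have := (div_lt_iff₀ hc0).mp hlt
        linarith
      have hKpos : 0 < (T₀' + c 0 * (p:ℕ) / ((m' * c 0 - a 0) / 2)) ^ p := by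
        positivity
      refine ⟨k₁' * Real.exp (-(m' * (T₀' + 1))) * T₀' ^ p *
          Real.exp (a 0 / c 0 * T₀') / c 0,
        k₂' * (T₀' + c 0 * (p:ℕ) / ((m' * c 0 - a 0) / 2)) ^ p / ((m' * c 0 - a 0) / 2) +
          (M' / a 0) * Real.exp ((a 0 / c 0) * T₀'),
        T₀' + 2,
        by positivity,
        by positivity,
        by linarith, ?_⟩
      intro T hT
      have hT1 : (1:ℝ) ≤ T := by linarith
      have hTpos : (0:ℝ) < T := by linarith
      have hq0 : 0 ≤ (T - T₀') / c 0 := div_nonneg (by linarith) hc0.le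
      have hcq : c 0 * ((T - T₀') / c 0) = T - T₀' := by field_simp
      have hEp : ∀ u : ℝ, T₀' ≤ u →
          (ENNReal.ofReal (k₁' * Real.exp (-(m' * u)) * u ^ p) ≤
            Lam (n+1) (fun i => a i.succ) (fun i => c i.succ) u ∧
          Lam (n+1) (fun i => a i.succ) (fun i => c i.succ) u ≤
            ENNReal.ofReal (k₂' * Real.exp (-(m' * u)) * u ^ p)) := by
        intro u hu
        have := hIH u hu
        rwa [hp, Nat.add_sub_cancel] at this
      rw [hrec T, hmeq, hbeq]
      simp only [Nat.sub_self, pow_zero, mul_one]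
      constructor
      · -- lower bound
        have hr0 : 0 ≤ (T - (T₀' + 1)) / c 0 := div_nonneg (by linarith) hc0.le
        have hpt : ∀ x ∈ Icc ((T - (T₀' + 1)) / c 0) ((T - T₀') / c 0),
            ENNReal.ofReal (Real.exp (-(a 0 * ((T - T₀') / c 0))) *
              (k₁' * Real.exp (-(m' * (T₀' + 1))) * T₀' ^ p))
            ≤ ENNReal.ofReal (Real.exp (-(a 0 * x))) *
              Lam (n+1) (fun i => a i.succ) (fun i => c i.succ) (T - c 0 * x) := by
          intro x hx
          obtain ⟨hxr, hxq⟩ := hx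
          have hcx1 : c 0 * x ≤ T - T₀' := by
            have := (le_div_iff₀ hc0).mp hxq
            linarith
          have hcx2 : T - (T₀' + 1) ≤ c 0 * x := by
            have := (div_le_iff₀ hc0).mp hxr
            linarith
          have hu1 : T₀' ≤ T - c 0 * x := by linarith
          have hu2 : T - c 0 * x ≤ T₀' + 1 := by linarith
          have hIHl := (hEp (T - c 0 * x) hu1).1
          calc ENNReal.ofReal (Real.exp (-(a 0 * ((T - T₀') / c 0))) *
              (k₁' * Real.exp (-(m' * (T₀' + 1))) * T₀' ^ p))
              = ENNReal.ofReal (Real.exp (-(a 0 * ((T - T₀') / c 0)))) *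
                ENNReal.ofReal (k₁' * Real.exp (-(m' * (T₀' + 1))) * T₀' ^ p) := by
                rw [← ENNReal.ofReal_mul (exp_nonneg _)]
            _ ≤ ENNReal.ofReal (Real.exp (-(a 0 * x))) *
                ENNReal.ofReal (k₁' * Real.exp (-(m' * (T - c 0 * x))) *
                  (T - c 0 * x) ^ p) := by
                apply mul_le_mul' (ENNReal.ofReal_le_ofReal ?_)
                  (ENNReal.ofReal_le_ofReal ?_)
                · apply Real.exp_le_exp.mpr
                  have := mul_le_mul_of_nonneg_left hxq ha0.le
                  linarith [(mul_le_mul_of_nonneg_left hxq ha0.le)]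
                · have h1 : Real.exp (-(m' * (T₀' + 1)))
                      ≤ Real.exp (-(m' * (T - c 0 * x))) := by
                    apply Real.exp_le_exp.mpr
                    nlinarith
                  have h2 : T₀' ^ p ≤ (T - c 0 * x) ^ p :=
                    pow_le_pow_left₀ hT₀'pos.le (by linarith) _
                  have hk1 : 0 ≤ k₁' * Real.exp (-(m' * (T - c 0 * x))) := by positivity
                  calc k₁' * Real.exp (-(m' * (T₀' + 1))) * T₀' ^ p
                      ≤ k₁' * Real.exp (-(m' * (T - c 0 * x))) * T₀' ^ p := by
                        apply mul_le_mul_of_nonneg_right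
                          (mul_le_mul_of_nonneg_left h1 hk₁'.le) (by positivity)
                    _ ≤ k₁' * Real.exp (-(m' * (T - c 0 * x))) * (T - c 0 * x) ^ p :=
                        mul_le_mul_of_nonneg_left h2 hk1
            _ ≤ ENNReal.ofReal (Real.exp (-(a 0 * x))) *
                Lam (n+1) (fun i => a i.succ) (fun i => c i.succ) (T - c 0 * x) :=
                mul_le_mul_right hIHl _
        have he1 : Real.exp (-(a 0 * ((T - T₀') / c 0)))
            = Real.exp (a 0 / c 0 * T₀') * Real.exp (-(a 0 / c 0 * T)) := by
          rw [← Real.exp_add]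
          congr 1
          field_simp
          ring
        calc ENNReal.ofReal (k₁' * Real.exp (-(m' * (T₀' + 1))) * T₀' ^ p *
            Real.exp (a 0 / c 0 * T₀') / c 0 * Real.exp (-(a 0 / c 0 * T)))
            = ENNReal.ofReal ((Real.exp (-(a 0 * ((T - T₀') / c 0))) *
              (k₁' * Real.exp (-(m' * (T₀' + 1))) * T₀' ^ p)) *
              ((T - T₀') / c 0 - (T - (T₀' + 1)) / c 0)) := by
              congr 1
              rw [he1]
              field_simp
              ring
          _ ≤ ∫⁻ x in Icc ((T - (T₀' + 1)) / c 0) ((T - T₀') / c 0),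
              ENNReal.ofReal (Real.exp (-(a 0 * x))) *
                Lam (n+1) (fun i => a i.succ) (fun i => c i.succ) (T - c 0 * x) :=
              const_lower (by positivity) hpt
          _ ≤ ∫⁻ x in Ici (0:ℝ), ENNReal.ofReal (Real.exp (-(a 0 * x))) *
              Lam (n+1) (fun i => a i.succ) (fun i => c i.succ) (T - c 0 * x) := by
              apply lintegral_mono_set
              intro x hx
              exact le_trans hr0 hx.1
      · -- upper bound
        rw [split_Ici hq0]
        have hmain : ∫⁻ x in Icc (0:ℝ) ((T - T₀') / c 0),
            ENNReal.ofReal (Real.exp (-(a 0 * x))) *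
              Lam (n+1) (fun i => a i.succ) (fun i => c i.succ) (T - c 0 * x)
            ≤ ENNReal.ofReal ((k₂' * (T₀' + c 0 * (p:ℕ) / ((m' * c 0 - a 0) / 2)) ^ p *
                Real.exp (-(m' * T)) *
                Real.exp ((m' * c 0 - a 0) / 2 * ((T - T₀') / c 0))) *
              (Real.exp ((m' * c 0 - a 0) / 2 * ((T - T₀') / c 0)) /
                ((m' * c 0 - a 0) / 2))) := by
          apply upper_grow hnu (by positivity) hq0
          intro x hx
          obtain ⟨hx0, hxq⟩ := hx
          have hcx : c 0 * x ≤ T - T₀' := by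
            have := (le_div_iff₀ hc0).mp hxq
            linarith
          have hu : T₀' ≤ T - c 0 * x := by linarith
          have hIHu := (hEp (T - c 0 * x) hu).2
          have hTdecomp : T - c 0 * x = T₀' + c 0 * ((T - T₀') / c 0 - x) := by
            rw [mul_sub, hcq]
            ring
          have hpoly : (T - c 0 * x) ^ p ≤
              (T₀' + c 0 * (p:ℕ) / ((m' * c 0 - a 0) / 2)) ^ p *
                Real.exp ((m' * c 0 - a 0) / 2 * ((T - T₀') / c 0 - x)) := by
            rw [hTdecomp]
            exact poly_le_exp p hnu hT₀'pos.le hc0.le (by linarith [(le_div_iff₀ hc0).mp hxq])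
          have hexp : Real.exp (-(a 0 * x)) * Real.exp (-(m' * (T - c 0 * x)))
              = Real.exp (-(m' * T)) * (Real.exp ((m' * c 0 - a 0) / 2 * x) *
                Real.exp ((m' * c 0 - a 0) / 2 * x)) := by
            rw [← Real.exp_add, ← Real.exp_add, ← Real.exp_add]
            congr 1
            ring
          calc ENNReal.ofReal (Real.exp (-(a 0 * x))) *
              Lam (n+1) (fun i => a i.succ) (fun i => c i.succ) (T - c 0 * x)
              ≤ ENNReal.ofReal (Real.exp (-(a 0 * x))) *
                ENNReal.ofReal (k₂' * Real.exp (-(m' * (T - c 0 * x))) *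
                  (T - c 0 * x) ^ p) := mul_le_mul_right hIHu _
            _ = ENNReal.ofReal (Real.exp (-(a 0 * x)) *
                (k₂' * Real.exp (-(m' * (T - c 0 * x))) * (T - c 0 * x) ^ p)) :=
                (ENNReal.ofReal_mul (exp_nonneg _)).symm
            _ ≤ ENNReal.ofReal ((k₂' * (T₀' + c 0 * (p:ℕ) / ((m' * c 0 - a 0) / 2)) ^ p *
                  Real.exp (-(m' * T)) *
                  Real.exp ((m' * c 0 - a 0) / 2 * ((T - T₀') / c 0))) *
                Real.exp ((m' * c 0 - a 0) / 2 * x)) := by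
                apply ENNReal.ofReal_le_ofReal
                calc Real.exp (-(a 0 * x)) *
                    (k₂' * Real.exp (-(m' * (T - c 0 * x))) * (T - c 0 * x) ^ p)
                    = k₂' * (Real.exp (-(a 0 * x)) * Real.exp (-(m' * (T - c 0 * x)))) *
                      (T - c 0 * x) ^ p := by ring
                  _ = k₂' * Real.exp (-(m' * T)) *
                      (Real.exp ((m' * c 0 - a 0) / 2 * x) *
                        Real.exp ((m' * c 0 - a 0) / 2 * x)) * (T - c 0 * x) ^ p := by
                      rw [hexp]; ring
                  _ ≤ k₂' * Real.exp (-(m' * T)) *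
                      (Real.exp ((m' * c 0 - a 0) / 2 * x) *
                        Real.exp ((m' * c 0 - a 0) / 2 * x)) *
                      ((T₀' + c 0 * (p:ℕ) / ((m' * c 0 - a 0) / 2)) ^ p *
                        Real.exp ((m' * c 0 - a 0) / 2 * ((T - T₀') / c 0 - x))) := by
                      apply mul_le_mul_of_nonneg_left hpoly (by positivity)
                  _ = (k₂' * (T₀' + c 0 * (p:ℕ) / ((m' * c 0 - a 0) / 2)) ^ p *
                        Real.exp (-(m' * T)) *
                        Real.exp ((m' * c 0 - a 0) / 2 * ((T - T₀') / c 0))) *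
                      Real.exp ((m' * c 0 - a 0) / 2 * x) := by
                      have hFG : Real.exp ((m' * c 0 - a 0) / 2 * x) *
                          Real.exp ((m' * c 0 - a 0) / 2 * ((T - T₀') / c 0 - x))
                          = Real.exp ((m' * c 0 - a 0) / 2 * ((T - T₀') / c 0)) := by
                        rw [← Real.exp_add]
                        congr 1
                        ring
                      calc k₂' * Real.exp (-(m' * T)) *
                          (Real.exp ((m' * c 0 - a 0) / 2 * x) *
                            Real.exp ((m' * c 0 - a 0) / 2 * x)) *
                          ((T₀' + c 0 * (p:ℕ) / ((m' * c 0 - a 0) / 2)) ^ p *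
                            Real.exp ((m' * c 0 - a 0) / 2 * ((T - T₀') / c 0 - x)))
                          = k₂' * (T₀' + c 0 * (p:ℕ) / ((m' * c 0 - a 0) / 2)) ^ p *
                            Real.exp (-(m' * T)) *
                            (Real.exp ((m' * c 0 - a 0) / 2 * x) *
                              Real.exp ((m' * c 0 - a 0) / 2 * ((T - T₀') / c 0 - x))) *
                            Real.exp ((m' * c 0 - a 0) / 2 * x) := by ring
                        _ = (k₂' * (T₀' + c 0 * (p:ℕ) / ((m' * c 0 - a 0) / 2)) ^ p *
                            Real.exp (-(m' * T)) *
                            Real.exp ((m' * c 0 - a 0) / 2 * ((T - T₀') / c 0))) *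
                            Real.exp ((m' * c 0 - a 0) / 2 * x) := by rw [hFG]
        have htail : ∫⁻ x in Ioi ((T - T₀') / c 0),
            ENNReal.ofReal (Real.exp (-(a 0 * x))) *
              Lam (n+1) (fun i => a i.succ) (fun i => c i.succ) (T - c 0 * x)
            ≤ ENNReal.ofReal (M' * (Real.exp (-(a 0 * ((T - T₀') / c 0))) / a 0)) :=
          tail_bound ha0 hM'pos.le (fun x => hmass _)
        have hKnn : (0:ℝ) ≤ (T₀' + c 0 * (p:ℕ) / ((m' * c 0 - a 0) / 2)) ^ p := by
          positivity
        have hu1 : (0:ℝ) ≤ (k₂' * (T₀' + c 0 * (p:ℕ) / ((m' * c 0 - a 0) / 2)) ^ p *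
            Real.exp (-(m' * T)) *
            Real.exp ((m' * c 0 - a 0) / 2 * ((T - T₀') / c 0))) *
            (Real.exp ((m' * c 0 - a 0) / 2 * ((T - T₀') / c 0)) /
              ((m' * c 0 - a 0) / 2)) := by positivity
        have hu2 : (0:ℝ) ≤ M' * (Real.exp (-(a 0 * ((T - T₀') / c 0))) / a 0) :=
          mul_nonneg hM'pos.le (div_nonneg (exp_nonneg _) ha0.le)
        have he1 : Real.exp (-(a 0 * ((T - T₀') / c 0)))
            = Real.exp (a 0 / c 0 * T₀') * Real.exp (-(a 0 / c 0 * T)) := by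
          rw [← Real.exp_add]
          congr 1
          field_simp
          ring
        have he2 : Real.exp (-(m' * T)) *
            (Real.exp ((m' * c 0 - a 0) / 2 * ((T - T₀') / c 0)) *
              Real.exp ((m' * c 0 - a 0) / 2 * ((T - T₀') / c 0)))
            = Real.exp (-((m' - a 0 / c 0) * T₀')) * Real.exp (-(a 0 / c 0 * T)) := by
          rw [← Real.exp_add, ← Real.exp_add, ← Real.exp_add]
          congr 1
          field_simp
          ring
        have hreal : (k₂' * (T₀' + c 0 * (p:ℕ) / ((m' * c 0 - a 0) / 2)) ^ p *
            Real.exp (-(m' * T)) *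
            Real.exp ((m' * c 0 - a 0) / 2 * ((T - T₀') / c 0))) *
            (Real.exp ((m' * c 0 - a 0) / 2 * ((T - T₀') / c 0)) /
              ((m' * c 0 - a 0) / 2)) +
            M' * (Real.exp (-(a 0 * ((T - T₀') / c 0))) / a 0)
            ≤ (k₂' * (T₀' + c 0 * (p:ℕ) / ((m' * c 0 - a 0) / 2)) ^ p /
                ((m' * c 0 - a 0) / 2) +
              M' / a 0 * Real.exp (a 0 / c 0 * T₀')) *
              Real.exp (-(a 0 / c 0 * T)) := by
          have hh1 : (k₂' * (T₀' + c 0 * (p:ℕ) / ((m' * c 0 - a 0) / 2)) ^ p *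
              Real.exp (-(m' * T)) *
              Real.exp ((m' * c 0 - a 0) / 2 * ((T - T₀') / c 0))) *
              (Real.exp ((m' * c 0 - a 0) / 2 * ((T - T₀') / c 0)) /
                ((m' * c 0 - a 0) / 2))
              = (k₂' * (T₀' + c 0 * (p:ℕ) / ((m' * c 0 - a 0) / 2)) ^ p /
                  ((m' * c 0 - a 0) / 2)) *
                (Real.exp (-((m' - a 0 / c 0) * T₀')) * Real.exp (-(a 0 / c 0 * T))) := by
            rw [← he2]
            ring
          have hh2 : Real.exp (-((m' - a 0 / c 0) * T₀')) ≤ 1 := by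
            apply Real.exp_le_one_iff.mpr
            have : 0 < m' - a 0 / c 0 := by linarith
            nlinarith
          have hh3 : (k₂' * (T₀' + c 0 * (p:ℕ) / ((m' * c 0 - a 0) / 2)) ^ p /
                  ((m' * c 0 - a 0) / 2)) *
                (Real.exp (-((m' - a 0 / c 0) * T₀')) * Real.exp (-(a 0 / c 0 * T)))
              ≤ (k₂' * (T₀' + c 0 * (p:ℕ) / ((m' * c 0 - a 0) / 2)) ^ p /
                  ((m' * c 0 - a 0) / 2)) * Real.exp (-(a 0 / c 0 * T)) := by
            apply mul_le_mul_of_nonneg_left _ (by positivity)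
            nlinarith [exp_nonneg (-(a 0 / c 0 * T)), Real.exp_pos (-(a 0 / c 0 * T))]
          have hh4 : M' * (Real.exp (-(a 0 * ((T - T₀') / c 0))) / a 0)
              = M' / a 0 * Real.exp (a 0 / c 0 * T₀') * Real.exp (-(a 0 / c 0 * T)) := by
            rw [he1]
            ring
          rw [hh1, hh4]
          calc _ ≤ (k₂' * (T₀' + c 0 * (p:ℕ) / ((m' * c 0 - a 0) / 2)) ^ p /
                  ((m' * c 0 - a 0) / 2)) * Real.exp (-(a 0 / c 0 * T)) +
                M' / a 0 * Real.exp (a 0 / c 0 * T₀') * Real.exp (-(a 0 / c 0 * T)) :=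
                add_le_add hh3 (le_refl _)
            _ = _ := by ring
        refine le_trans (add_le_add hmain htail) ?_
        exact le_trans (le_of_eq (ENNReal.ofReal_add hu1 hu2).symm)
          (ENNReal.ofReal_le_ofReal hreal)
    · -- a 0 / c 0 = m' ; m = m', b = b' + 1
      have hmeq : m = m' := by
        rcases hmor with h | h
        · rw [h, heq]
        · exact h
      have ha0eq : a 0 = m' * c 0 := by
        rw [div_eq_iff (ne_of_gt hc0)] at heq
        exact heq
      have hbeq : b = b' + 1 := by
        rw [hcard, if_pos (by rw [hmeq]; exact heq), hb'def, hmeq]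
        omega
      obtain ⟨p, hp⟩ : ∃ p : ℕ, b' = p + 1 :=
        ⟨b' - 1, (Nat.succ_pred_eq_of_pos hb'pos).symm⟩
      have hEp : ∀ u : ℝ, T₀' ≤ u →
          (ENNReal.ofReal (k₁' * Real.exp (-(m' * u)) * u ^ p) ≤
            Lam (n+1) (fun i => a i.succ) (fun i => c i.succ) u ∧
          Lam (n+1) (fun i => a i.succ) (fun i => c i.succ) u ≤
            ENNReal.ofReal (k₂' * Real.exp (-(m' * u)) * u ^ p)) := by
        intro u hu
        have := hIH u hu
        rwa [hp, Nat.add_sub_cancel] at this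
      refine ⟨k₁' * (1/2) ^ p / (2 * c 0),
        k₂' / c 0 + (M' / a 0) * Real.exp ((a 0 / c 0) * T₀'),
        2 * T₀' + 1,
        div_pos (mul_pos hk₁' (pow_pos (by norm_num) _)) (by linarith),
        add_pos (div_pos hk₂' hc0) (mul_pos (div_pos hM'pos ha0) (exp_pos _)),
        by linarith, ?_⟩
      intro T hT
      have hT1 : (1:ℝ) ≤ T := by linarith
      have hTpos : (0:ℝ) < T := by linarith
      have hT2T₀' : 2 * T₀' ≤ T := by linarith
      have hq0 : 0 ≤ (T - T₀') / c 0 := div_nonneg (by linarith) hc0.le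
      have hE : ∀ x : ℝ, Real.exp (-(a 0 * x)) * Real.exp (-(m' * (T - c 0 * x)))
          = Real.exp (-(m' * T)) := by
        intro x
        rw [← Real.exp_add]
        congr 1
        rw [ha0eq]
        ring
      rw [hrec T, hmeq, hbeq]
      have hbsimp : b' + 1 - 1 = p + 1 := by omega
      rw [hbsimp]
      constructor
      · -- lower bound
        have h2c0 : 0 < 2 * c 0 := by linarith
        have hpt : ∀ x ∈ Icc (0:ℝ) (T / (2 * c 0)),
            ENNReal.ofReal (k₁' * Real.exp (-(m' * T)) * (T/2) ^ p)
            ≤ ENNReal.ofReal (Real.exp (-(a 0 * x))) *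
              Lam (n+1) (fun i => a i.succ) (fun i => c i.succ) (T - c 0 * x) := by
          intro x hx
          obtain ⟨hx0, hxq⟩ := hx
          have hcx : c 0 * x ≤ T / 2 := by
            have := (le_div_iff₀ h2c0).mp hxq
            linarith
          have hu : T₀' ≤ T - c 0 * x := by linarith
          have hIHl := (hEp (T - c 0 * x) hu).1
          calc ENNReal.ofReal (k₁' * Real.exp (-(m' * T)) * (T/2) ^ p)
              ≤ ENNReal.ofReal (Real.exp (-(a 0 * x)) *
                (k₁' * Real.exp (-(m' * (T - c 0 * x))) * (T - c 0 * x) ^ p)) := by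
                apply ENNReal.ofReal_le_ofReal
                have hpow : (T/2 : ℝ) ^ p ≤ (T - c 0 * x) ^ p :=
                  pow_le_pow_left₀ (by linarith) (by linarith) _
                calc k₁' * Real.exp (-(m' * T)) * (T/2) ^ p
                    = Real.exp (-(a 0 * x)) *
                      (k₁' * Real.exp (-(m' * (T - c 0 * x)))) * (T/2) ^ p := by
                      rw [show Real.exp (-(a 0 * x)) *
                        (k₁' * Real.exp (-(m' * (T - c 0 * x))))
                        = k₁' * (Real.exp (-(a 0 * x)) *
                          Real.exp (-(m' * (T - c 0 * x)))) from by ring, hE x]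
                  _ ≤ Real.exp (-(a 0 * x)) *
                      (k₁' * Real.exp (-(m' * (T - c 0 * x)))) * (T - c 0 * x) ^ p := by
                      apply mul_le_mul_of_nonneg_left hpow (by positivity)
                  _ = Real.exp (-(a 0 * x)) *
                      (k₁' * Real.exp (-(m' * (T - c 0 * x))) * (T - c 0 * x) ^ p) := by
                      ring
            _ = ENNReal.ofReal (Real.exp (-(a 0 * x))) *
                ENNReal.ofReal (k₁' * Real.exp (-(m' * (T - c 0 * x))) *
                  (T - c 0 * x) ^ p) := ENNReal.ofReal_mul (exp_nonneg _)
            _ ≤ ENNReal.ofReal (Real.exp (-(a 0 * x))) *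
                Lam (n+1) (fun i => a i.succ) (fun i => c i.succ) (T - c 0 * x) :=
                mul_le_mul_right hIHl _
        calc ENNReal.ofReal (k₁' * (1/2) ^ p / (2 * c 0) * Real.exp (-(m' * T)) *
            T ^ (p + 1))
            = ENNReal.ofReal ((k₁' * Real.exp (-(m' * T)) * (T/2) ^ p) *
              (T / (2 * c 0) - 0)) := by
              congr 1
              field_simp
              ring
          _ ≤ ∫⁻ x in Icc (0:ℝ) (T / (2 * c 0)),
              ENNReal.ofReal (Real.exp (-(a 0 * x))) *
                Lam (n+1) (fun i => a i.succ) (fun i => c i.succ) (T - c 0 * x) :=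
              const_lower (by positivity) hpt
          _ ≤ ∫⁻ x in Ici (0:ℝ), ENNReal.ofReal (Real.exp (-(a 0 * x))) *
              Lam (n+1) (fun i => a i.succ) (fun i => c i.succ) (T - c 0 * x) :=
              lintegral_mono_set Icc_subset_Ici_self
      · -- upper bound
        rw [split_Ici hq0]
        have hmain : ∫⁻ x in Icc (0:ℝ) ((T - T₀') / c 0),
            ENNReal.ofReal (Real.exp (-(a 0 * x))) *
              Lam (n+1) (fun i => a i.succ) (fun i => c i.succ) (T - c 0 * x)
            ≤ ENNReal.ofReal ((k₂' * Real.exp (-(m' * T)) * T ^ p) *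
              ((T - T₀') / c 0 - 0)) := by
          apply upper_const (by positivity)
          intro x hx
          obtain ⟨hx0, hxq⟩ := hx
          have hcx : c 0 * x ≤ T - T₀' := by
            have := (le_div_iff₀ hc0).mp hxq
            linarith
          have hu : T₀' ≤ T - c 0 * x := by linarith
          have hIHu := (hEp (T - c 0 * x) hu).2
          calc ENNReal.ofReal (Real.exp (-(a 0 * x))) *
              Lam (n+1) (fun i => a i.succ) (fun i => c i.succ) (T - c 0 * x)
              ≤ ENNReal.ofReal (Real.exp (-(a 0 * x))) *
                ENNReal.ofReal (k₂' * Real.exp (-(m' * (T - c 0 * x))) *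
                  (T - c 0 * x) ^ p) := mul_le_mul_right hIHu _
            _ = ENNReal.ofReal (Real.exp (-(a 0 * x)) *
                (k₂' * Real.exp (-(m' * (T - c 0 * x))) * (T - c 0 * x) ^ p)) :=
                (ENNReal.ofReal_mul (exp_nonneg _)).symm
            _ ≤ ENNReal.ofReal (k₂' * Real.exp (-(m' * T)) * T ^ p) := by
                apply ENNReal.ofReal_le_ofReal
                have hpow : (T - c 0 * x) ^ p ≤ T ^ p :=
                  pow_le_pow_left₀ (by linarith)
                    (by nlinarith [mul_nonneg hc0.le hx0]) _
                calc Real.exp (-(a 0 * x)) *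
                    (k₂' * Real.exp (-(m' * (T - c 0 * x))) * (T - c 0 * x) ^ p)
                    = k₂' * (Real.exp (-(a 0 * x)) *
                      Real.exp (-(m' * (T - c 0 * x)))) * (T - c 0 * x) ^ p := by
                      ring
                  _ = k₂' * Real.exp (-(m' * T)) * (T - c 0 * x) ^ p := by
                      rw [hE x]
                  _ ≤ k₂' * Real.exp (-(m' * T)) * T ^ p := by
                      apply mul_le_mul_of_nonneg_left hpow (by positivity)
        have htail : ∫⁻ x in Ioi ((T - T₀') / c 0),
            ENNReal.ofReal (Real.exp (-(a 0 * x))) *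
              Lam (n+1) (fun i => a i.succ) (fun i => c i.succ) (T - c 0 * x)
            ≤ ENNReal.ofReal (M' * (Real.exp (-(a 0 * ((T - T₀') / c 0))) / a 0)) :=
          tail_bound ha0 hM'pos.le (fun x => hmass _)
        have hu1 : (0:ℝ) ≤ (k₂' * Real.exp (-(m' * T)) * T ^ p) *
            ((T - T₀') / c 0 - 0) := by
          apply mul_nonneg (by positivity)
          have : (0:ℝ) ≤ (T - T₀') / c 0 := hq0
          linarith
        have hu2 : (0:ℝ) ≤ M' * (Real.exp (-(a 0 * ((T - T₀') / c 0))) / a 0) :=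
          mul_nonneg hM'pos.le (div_nonneg (exp_nonneg _) ha0.le)
        have he1 : Real.exp (-(a 0 * ((T - T₀') / c 0)))
            = Real.exp (a 0 / c 0 * T₀') * Real.exp (-(m' * T)) := by
          rw [← Real.exp_add]
          congr 1
          rw [ha0eq]
          field_simp
          ring
        have hreal : (k₂' * Real.exp (-(m' * T)) * T ^ p) * ((T - T₀') / c 0 - 0) +
            M' * (Real.exp (-(a 0 * ((T - T₀') / c 0))) / a 0)
            ≤ (k₂' / c 0 + M' / a 0 * Real.exp (a 0 / c 0 * T₀')) *
              Real.exp (-(m' * T)) * T ^ (p + 1) := by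
          have hh1 : (k₂' * Real.exp (-(m' * T)) * T ^ p) * ((T - T₀') / c 0 - 0)
              ≤ k₂' / c 0 * (Real.exp (-(m' * T)) * T ^ (p + 1)) := by
            rw [sub_zero]
            have h1 : (T - T₀') / c 0 ≤ T / c 0 :=
              (div_le_div_iff_of_pos_right hc0).mpr (by linarith)
            calc (k₂' * Real.exp (-(m' * T)) * T ^ p) * ((T - T₀') / c 0)
                ≤ (k₂' * Real.exp (-(m' * T)) * T ^ p) * (T / c 0) :=
                  mul_le_mul_of_nonneg_left h1 (by positivity)
              _ = k₂' / c 0 * (Real.exp (-(m' * T)) * T ^ (p + 1)) := by ring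
          have hTp1 : (1:ℝ) ≤ T ^ (p + 1) := by
            calc (1:ℝ) = 1 ^ (p + 1) := (one_pow _).symm
              _ ≤ T ^ (p + 1) := pow_le_pow_left₀ (by norm_num) hT1 _
          have hh2 : M' * (Real.exp (-(a 0 * ((T - T₀') / c 0))) / a 0)
              ≤ M' / a 0 * Real.exp (a 0 / c 0 * T₀') *
                (Real.exp (-(m' * T)) * T ^ (p + 1)) := by
            rw [he1]
            calc M' * (Real.exp (a 0 / c 0 * T₀') * Real.exp (-(m' * T)) / a 0)
                = M' / a 0 * Real.exp (a 0 / c 0 * T₀') *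
                  (Real.exp (-(m' * T)) * 1) := by ring
              _ ≤ M' / a 0 * Real.exp (a 0 / c 0 * T₀') *
                  (Real.exp (-(m' * T)) * T ^ (p + 1)) := by
                  apply mul_le_mul_of_nonneg_left _ (by positivity)
                  exact mul_le_mul_of_nonneg_left hTp1 (exp_nonneg _)
          calc (k₂' * Real.exp (-(m' * T)) * T ^ p) * ((T - T₀') / c 0 - 0) +
              M' * (Real.exp (-(a 0 * ((T - T₀') / c 0))) / a 0)
              ≤ k₂' / c 0 * (Real.exp (-(m' * T)) * T ^ (p + 1)) +
                M' / a 0 * Real.exp (a 0 / c 0 * T₀') *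
                  (Real.exp (-(m' * T)) * T ^ (p + 1)) := add_le_add hh1 hh2
            _ = (k₂' / c 0 + M' / a 0 * Real.exp (a 0 / c 0 * T₀')) *
                Real.exp (-(m' * T)) * T ^ (p + 1) := by ring
        refine le_trans (add_le_add hmain htail) ?_
        exact le_trans (le_of_eq (ENNReal.ofReal_add hu1 hu2).symm)
          (ENNReal.ofReal_le_ofReal hreal)
    · -- m' < a 0 / c 0 ; m = m', b = b'
      have hmeq : m = m' := by
        rcases hmor with h | h
        · rw [h] at hmm'; linarith
        · exact h
      have hbeq : b = b' := by
        rw [hcard, if_neg (by rw [hmeq]; exact ne_of_gt hgt), zero_add,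
          hb'def, hmeq]
      have hlam_pos : 0 < a 0 - m' * c 0 := by
        have := (lt_div_iff₀ hc0).mp hgt
        linarith
      refine ⟨k₁' * Real.exp (-(a 0)) * (1/2) ^ (b'-1),
        k₂' / (a 0 - m' * c 0) + (M' / a 0) * Real.exp ((a 0 / c 0) * T₀'),
        T₀' + 2 * c 0 + 1,
        mul_pos (mul_pos hk₁' (exp_pos _)) (pow_pos (by norm_num) _),
        add_pos (div_pos hk₂' hlam_pos) (mul_pos (div_pos hM'pos ha0) (exp_pos _)),
        by linarith, ?_⟩
      intro T hT
      have hT1 : (1:ℝ) ≤ T := by linarith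
      have hTpos : (0:ℝ) < T := by linarith
      have hTT₀' : T₀' + c 0 ≤ T := by linarith
      have hT2c : 2 * c 0 ≤ T := by linarith
      rw [hrec T, hmeq, hbeq]
      constructor
      · -- lower bound
        have hpt : ∀ x ∈ Icc (0:ℝ) 1,
            ENNReal.ofReal (Real.exp (-(a 0)) *
              (k₁' * Real.exp (-(m' * T)) * (T/2) ^ (b'-1)))
            ≤ ENNReal.ofReal (Real.exp (-(a 0 * x))) *
              Lam (n+1) (fun i => a i.succ) (fun i => c i.succ) (T - c 0 * x) := by
          intro x hx
          obtain ⟨hx0, hx1⟩ := hx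
          have hcx : c 0 * x ≤ c 0 := by nlinarith
          have hu : T₀' ≤ T - c 0 * x := by linarith
          have hIHl := (hIH (T - c 0 * x) hu).1
          calc ENNReal.ofReal (Real.exp (-(a 0)) *
              (k₁' * Real.exp (-(m' * T)) * (T/2) ^ (b'-1)))
              = ENNReal.ofReal (Real.exp (-(a 0))) *
                ENNReal.ofReal (k₁' * Real.exp (-(m' * T)) * (T/2) ^ (b'-1)) := by
                rw [← ENNReal.ofReal_mul (exp_nonneg _)]
            _ ≤ ENNReal.ofReal (Real.exp (-(a 0 * x))) *
                ENNReal.ofReal (k₁' * Real.exp (-(m' * (T - c 0 * x))) *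
                  (T - c 0 * x) ^ (b'-1)) := by
                apply mul_le_mul' (ENNReal.ofReal_le_ofReal ?_)
                  (ENNReal.ofReal_le_ofReal ?_)
                · apply Real.exp_le_exp.mpr
                  nlinarith [mul_le_mul_of_nonneg_left hx1 ha0.le]
                · have h1 : Real.exp (-(m' * T)) ≤ Real.exp (-(m' * (T - c 0 * x))) := by
                    apply Real.exp_le_exp.mpr
                    nlinarith [mul_nonneg (mul_nonneg hm'pos.le hc0.le) hx0]
                  have h2 : (T/2 : ℝ) ^ (b'-1) ≤ (T - c 0 * x) ^ (b'-1) := by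
                    apply pow_le_pow_left₀ (by linarith) (by linarith)
                  calc k₁' * Real.exp (-(m' * T)) * (T/2) ^ (b'-1)
                      ≤ k₁' * Real.exp (-(m' * (T - c 0 * x))) * (T/2) ^ (b'-1) := by
                        apply mul_le_mul_of_nonneg_right
                          (mul_le_mul_of_nonneg_left h1 hk₁'.le) (by positivity)
                    _ ≤ k₁' * Real.exp (-(m' * (T - c 0 * x))) * (T - c 0 * x) ^ (b'-1) := by
                        apply mul_le_mul_of_nonneg_left h2 (by positivity)
            _ ≤ ENNReal.ofReal (Real.exp (-(a 0 * x))) *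
                Lam (n+1) (fun i => a i.succ) (fun i => c i.succ) (T - c 0 * x) :=
                mul_le_mul_right hIHl _
        calc ENNReal.ofReal (k₁' * Real.exp (-(a 0)) * (1/2) ^ (b'-1) *
            Real.exp (-(m' * T)) * T ^ (b' - 1))
            = ENNReal.ofReal ((Real.exp (-(a 0)) *
              (k₁' * Real.exp (-(m' * T)) * (T/2) ^ (b'-1))) * (1 - 0)) := by
              congr 1
              ring
          _ ≤ ∫⁻ x in Icc (0:ℝ) 1, ENNReal.ofReal (Real.exp (-(a 0 * x))) *
              Lam (n+1) (fun i => a i.succ) (fun i => c i.succ) (T - c 0 * x) :=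
              const_lower (by positivity) hpt
          _ ≤ ∫⁻ x in Ici (0:ℝ), ENNReal.ofReal (Real.exp (-(a 0 * x))) *
              Lam (n+1) (fun i => a i.succ) (fun i => c i.succ) (T - c 0 * x) :=
              lintegral_mono_set Icc_subset_Ici_self
      · -- upper bound
        have hq0 : 0 ≤ (T - T₀')/ c 0 := div_nonneg (by linarith) hc0.le
        rw [split_Ici hq0]
        have hmain : ∫⁻ x in Icc (0:ℝ) ((T - T₀')/ c 0),
            ENNReal.ofReal (Real.exp (-(a 0 * x))) *
              Lam (n+1) (fun i => a i.succ) (fun i => c i.succ) (T - c 0 * x)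
            ≤ ENNReal.ofReal ((k₂' * Real.exp (-(m' * T)) * T ^ (b'-1)) /
                (a 0 - m' * c 0)) := by
          apply upper_decay hlam_pos (by positivity) measurableSet_Icc Icc_subset_Ici_self
          intro x hx
          obtain ⟨hx0, hxq⟩ := hx
          have hcx : c 0 * x ≤ T - T₀' := by
            have := (le_div_iff₀ hc0).mp hxq
            linarith
          have hu : T₀' ≤ T - c 0 * x := by linarith
          have hIHu := (hIH (T - c 0 * x) hu).2
          have hexp : Real.exp (-(a 0 * x)) * Real.exp (-(m' * (T - c 0 * x)))
              = Real.exp (-(m' * T)) * Real.exp (-((a 0 - m' * c 0) * x)) := by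
            rw [← Real.exp_add, ← Real.exp_add]
            congr 1
            ring
          have hpow : (T - c 0 * x) ^ (b'-1) ≤ T ^ (b'-1) :=
            pow_le_pow_left₀ (by linarith) (by nlinarith [mul_nonneg hc0.le hx0]) _
          calc ENNReal.ofReal (Real.exp (-(a 0 * x))) *
              Lam (n+1) (fun i => a i.succ) (fun i => c i.succ) (T - c 0 * x)
              ≤ ENNReal.ofReal (Real.exp (-(a 0 * x))) *
                ENNReal.ofReal (k₂' * Real.exp (-(m' * (T - c 0 * x))) *
                  (T - c 0 * x) ^ (b'-1)) := mul_le_mul_right hIHu _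
            _ = ENNReal.ofReal (Real.exp (-(a 0 * x)) *
                (k₂' * Real.exp (-(m' * (T - c 0 * x))) * (T - c 0 * x) ^ (b'-1))) :=
                (ENNReal.ofReal_mul (exp_nonneg _)).symm
            _ ≤ ENNReal.ofReal ((k₂' * Real.exp (-(m' * T)) * T ^ (b'-1)) *
                Real.exp (-((a 0 - m' * c 0) * x))) := by
                apply ENNReal.ofReal_le_ofReal
                calc Real.exp (-(a 0 * x)) *
                    (k₂' * Real.exp (-(m' * (T - c 0 * x))) * (T - c 0 * x) ^ (b'-1))
                    = k₂' * (Real.exp (-(a 0 * x)) * Real.exp (-(m' * (T - c 0 * x)))) *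
                      (T - c 0 * x) ^ (b'-1) := by ring
                  _ = k₂' * (Real.exp (-(m' * T)) * Real.exp (-((a 0 - m' * c 0) * x))) *
                      (T - c 0 * x) ^ (b'-1) := by rw [hexp]
                  _ ≤ k₂' * (Real.exp (-(m' * T)) * Real.exp (-((a 0 - m' * c 0) * x))) *
                      T ^ (b'-1) := by
                      apply mul_le_mul_of_nonneg_left hpow (by positivity)
                  _ = (k₂' * Real.exp (-(m' * T)) * T ^ (b'-1)) *
                      Real.exp (-((a 0 - m' * c 0) * x)) := by ring
        have htail : ∫⁻ x in Ioi ((T - T₀')/ c 0),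
            ENNReal.ofReal (Real.exp (-(a 0 * x))) *
              Lam (n+1) (fun i => a i.succ) (fun i => c i.succ) (T - c 0 * x)
            ≤ ENNReal.ofReal (M' * (Real.exp (-(a 0 * ((T - T₀')/ c 0))) / a 0)) :=
          tail_bound ha0 hM'pos.le (fun x => hmass _)
        have hu1 : 0 ≤ (k₂' * Real.exp (-(m' * T)) * T ^ (b'-1)) / (a 0 - m' * c 0) :=
          div_nonneg (mul_nonneg (mul_nonneg hk₂'.le (exp_nonneg _))
            (pow_nonneg hTpos.le _)) hlam_pos.le
        have hu2 : 0 ≤ M' * (Real.exp (-(a 0 * ((T - T₀')/ c 0))) / a 0) :=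
          mul_nonneg hM'pos.le (div_nonneg (exp_nonneg _) ha0.le)
        have hreal : (k₂' * Real.exp (-(m' * T)) * T ^ (b'-1)) / (a 0 - m' * c 0) +
            M' * (Real.exp (-(a 0 * ((T - T₀')/ c 0))) / a 0)
            ≤ (k₂' / (a 0 - m' * c 0) + M' / a 0 * Real.exp (a 0 / c 0 * T₀')) *
              Real.exp (-(m' * T)) * T ^ (b' - 1) := by
            have hTp : (1:ℝ) ≤ T ^ (b'-1) := by
              calc (1:ℝ) = 1 ^ (b'-1) := (one_pow _).symm
                _ ≤ T ^ (b'-1) := pow_le_pow_left₀ (by norm_num) hT1 _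
            have he1 : Real.exp (-(a 0 * ((T - T₀')/ c 0)))
                = Real.exp (a 0 / c 0 * T₀') * Real.exp (-(a 0 / c 0 * T)) := by
              rw [← Real.exp_add]
              congr 1
              field_simp
              ring
            have he2 : Real.exp (-(a 0 / c 0 * T)) ≤ Real.exp (-(m' * T)) := by
              apply Real.exp_le_exp.mpr
              have : m' * T ≤ a 0 / c 0 * T :=
                mul_le_mul_of_nonneg_right hgt.le hTpos.le
              linarith
            have h2 : M' * (Real.exp (-(a 0 * ((T - T₀')/ c 0))) / a 0)
                ≤ M' / a 0 * Real.exp (a 0 / c 0 * T₀') *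
                  (Real.exp (-(m' * T)) * T ^ (b'-1)) := by
              rw [he1]
              calc M' * (Real.exp (a 0 / c 0 * T₀') * Real.exp (-(a 0 / c 0 * T)) / a 0)
                  = M' / a 0 * Real.exp (a 0 / c 0 * T₀') *
                    (Real.exp (-(a 0 / c 0 * T)) * 1) := by ring
                _ ≤ M' / a 0 * Real.exp (a 0 / c 0 * T₀') *
                    (Real.exp (-(m' * T)) * T ^ (b'-1)) := by
                    apply mul_le_mul_of_nonneg_left _ (by positivity)
                    exact mul_le_mul he2 hTp (by norm_num) (exp_nonneg _)
            have h1 : (k₂' * Real.exp (-(m' * T)) * T ^ (b'-1)) / (a 0 - m' * c 0)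
                = k₂' / (a 0 - m' * c 0) * (Real.exp (-(m' * T)) * T ^ (b'-1)) := by
              ring
            calc (k₂' * Real.exp (-(m' * T)) * T ^ (b'-1)) / (a 0 - m' * c 0) +
                M' * (Real.exp (-(a 0 * ((T - T₀')/ c 0))) / a 0)
                ≤ k₂' / (a 0 - m' * c 0) * (Real.exp (-(m' * T)) * T ^ (b'-1)) +
                  M' / a 0 * Real.exp (a 0 / c 0 * T₀') *
                    (Real.exp (-(m' * T)) * T ^ (b'-1)) := add_le_add (le_of_eq h1) h2
              _ = (k₂' / (a 0 - m' * c 0) + M' / a 0 * Real.exp (a 0 / c 0 * T₀')) *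
                  Real.exp (-(m' * T)) * T ^ (b' - 1) := by ring
        refine le_trans (add_le_add hmain htail) ?_
        exact le_trans (le_of_eq (ENNReal.ofReal_add hu1 hu2).symm)
          (ENNReal.ofReal_le_ofReal hreal)

/-- Asymptotics of the exponential integral over the part of the nonnegative
orthant `{t ≥ 0 : ∑ cᵢ tᵢ ≥ T}`: it is comparable to `e^{-mT} T^{b-1}`, where
`m = min aᵢ/cᵢ` and `b` is the number of indices achieving the minimum. -/
theorem stmt_9 (r : ℕ) [NeZero r] (a c : Fin r → ℝ)
    (ha : ∀ i, 0 < a i) (hc : ∀ i, 0 < c i)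
    (m : ℝ) (hm : m = ⨅ i, a i / c i)
    (b : ℕ) (hb : b = Nat.card {i : Fin r // a i / c i = m}) :
    ∃ k₁ k₂ T₀ : ℝ, 0 < k₁ ∧ k₁ ≤ k₂ ∧ 0 < T₀ ∧ ∀ T, T₀ ≤ T →
      k₁ * Real.exp (-(m * T)) * T ^ (b - 1) ≤
        (∫ t in {t : Fin r → ℝ | (∀ i, 0 ≤ t i) ∧ T ≤ ∑ i, c i * t i},
          Real.exp (-(∑ i, a i * t i))) ∧
      (∫ t in {t : Fin r → ℝ | (∀ i, 0 ≤ t i) ∧ T ≤ ∑ i, c i * t i},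
          Real.exp (-(∑ i, a i * t i))) ≤
        k₂ * Real.exp (-(m * T)) * T ^ (b - 1) := by
  obtain ⟨n, rfl⟩ : ∃ n, r = n + 1 :=
    ⟨r - 1, (Nat.succ_pred_eq_of_pos (Nat.pos_of_ne_zero (NeZero.ne r))).symm⟩
  have hm1 : ∀ i, m ≤ a i / c i := by
    intro i
    rw [hm]
    exact ciInf_le (Set.Finite.bddBelow (Set.finite_range _)) i
  have hm2 : ∃ i, a i / c i = m := by
    obtain ⟨i, hi⟩ := exists_eq_ciInf_of_finite (f := fun i : Fin (n+1) => a i / c i)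
    exact ⟨i, by rw [hm, hi]⟩
  have hbcard : b = (Finset.univ.filter (fun i => a i / c i = m)).card := by
    rw [hb, Nat.card_eq_fintype_card, Fintype.card_subtype]
  obtain ⟨k₁, k₂, T₀, hk₁, hk₂, hT₀, hbound⟩ := key n a c ha hc m hm1 hm2 b hbcard
  refine ⟨k₁, max k₁ k₂, T₀, hk₁, le_max_left _ _, lt_of_lt_of_le one_pos hT₀, ?_⟩
  intro T hT
  have hTpos : (0:ℝ) < T := lt_of_lt_of_le (lt_of_lt_of_le one_pos hT₀) hT
  obtain ⟨hlow, hup⟩ := hbound T hT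
  have hSmeas := meas_set (n+1) c T
  have hLamEq : Lam (n+1) a c T =
      ∫⁻ t in {t : Fin (n+1) → ℝ | (∀ i, 0 ≤ t i) ∧ T ≤ ∑ i, c i * t i},
        ENNReal.ofReal (Real.exp (-(∑ i, a i * t i))) := by
    rw [← lintegral_indicator hSmeas]
    refine lintegral_congr fun t => ?_
    by_cases h' : (∀ i, 0 ≤ t i) ∧ T ≤ ∑ i, c i * t i
    · simp [Lam, Set.indicator_apply, Set.mem_setOf_eq, h']
    · simp [Lam, Set.indicator_apply, Set.mem_setOf_eq, h']
  have hint : (∫ t in {t : Fin (n+1) → ℝ | (∀ i, 0 ≤ t i) ∧ T ≤ ∑ i, c i * t i},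
      Real.exp (-(∑ i, a i * t i))) = (Lam (n+1) a c T).toReal := by
    rw [integral_eq_lintegral_of_nonneg_ae (f := fun t : Fin (n+1) → ℝ => Real.exp (-(∑ i, a i * t i)))
      (Filter.Eventually.of_forall fun t => exp_nonneg _)
      ((Real.measurable_exp.comp
        (Finset.measurable_sum _ fun i _ =>
          (measurable_pi_apply i).const_mul _).neg).aestronglyMeasurable),
      hLamEq]
  have hne : Lam (n+1) a c T ≠ ⊤ := ne_top_of_le_ne_top ENNReal.ofReal_ne_top hup
  have hnonneg1 : 0 ≤ k₁ * Real.exp (-(m * T)) * T ^ (b - 1) := by positivity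
  have hnonneg2 : 0 ≤ k₂ * Real.exp (-(m * T)) * T ^ (b - 1) := by positivity
  constructor
  · rw [hint]
    calc k₁ * Real.exp (-(m * T)) * T ^ (b - 1)
        = (ENNReal.ofReal (k₁ * Real.exp (-(m * T)) * T ^ (b - 1))).toReal :=
          (ENNReal.toReal_ofReal hnonneg1).symm
      _ ≤ (Lam (n+1) a c T).toReal := ENNReal.toReal_mono hne hlow
  · rw [hint]
    calc (Lam (n+1) a c T).toReal
        ≤ (ENNReal.ofReal (k₂ * Real.exp (-(m * T)) * T ^ (b - 1))).toReal :=
          ENNReal.toReal_mono ENNReal.ofReal_ne_top hup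
      _ = k₂ * Real.exp (-(m * T)) * T ^ (b - 1) := ENNReal.toReal_ofReal hnonneg2
      _ ≤ max k₁ k₂ * Real.exp (-(m * T)) * T ^ (b - 1) := by
          apply mul_le_mul_of_nonneg_right
            (mul_le_mul_of_nonneg_right (le_max_right _ _) (exp_nonneg _))
            (by positivity)
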